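/- For a nonnegative integer k ≤ M and real X not in {0,1,...,M}, Σ_{b=0}^{M} (-1)^b C(M,b) C(b,k) / (X-b) = (-1)^M · M! / (X-M)_{M+1} · C(X,k), where C(X,k) is the binomial coefficient polynomial and (X-M)_{M+1} the Pochhammer symbol. -/

import Mathlib

open Finset

noncomputable def poch (x : ℝ) (m : ℕ) : ℝ := (ascPochhammer ℝ m).eval x

noncomputable def genBinom (x : ℝ) (k : ℕ) : ℝ :=
  (descPochhammer ℝ k).eval x / (Nat.factorial k)

lemma poch_zero (x : ℝ) : poch x 0 = 1 := by simp [poch]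

lemma poch_succ (x : ℝ) (n : ℕ) : poch x (n+1) = poch x n * (x + n) := by
  simp [poch, ascPochhammer_succ_eval]

lemma poch_succ_left (x : ℝ) (n : ℕ) : poch x (n+1) = x * poch (x+1) n := by
  simp [poch, ascPochhammer_succ_left, Polynomial.eval_comp]

lemma poch_add (x : ℝ) (n m : ℕ) : poch x (n+m) = poch x n * poch (x + n) m := by
  have h := ascPochhammer_mul ℝ n m
  have := congrArg (Polynomial.eval x) h
  simpa [poch, Polynomial.eval_comp] using this.symm

lemma poch_ne_zero (x : ℝ) (m : ℕ) (h : ∀ j < m, x + j ≠ 0) : poch x m ≠ 0 := by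
  induction m with
  | zero => simp [poch_zero]
  | succ n ih =>
    rw [poch_succ]
    exact mul_ne_zero (ih fun j hj => h j (by omega)) (h n (by omega))

lemma lemA : ∀ N : ℕ, ∀ Y : ℝ, (∀ j : ℕ, j ≤ N → Y ≠ j) →
    ∑ j ∈ Finset.range (N+1), (-1)^j * (Nat.choose N j) / (Y - j) =
      (-1)^N * (Nat.factorial N) / poch (Y - N) (N+1) := by
  intro N
  induction N with
  | zero =>
    intro Y hY
    simp [poch_succ, poch_zero]
  | succ N ih =>
    intro Y hY
    have hsplit : ∑ j ∈ Finset.range (N+2), (-1)^j * (Nat.choose (N+1) j) / (Y - j)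
        = (∑ j ∈ Finset.range (N+1), (-1)^j * (Nat.choose N j) / (Y - j))
          - ∑ j ∈ Finset.range (N+1), (-1)^j * (Nat.choose N j) / ((Y-1) - j) := by
      rw [Finset.sum_range_succ' _ (N+1)]
      have h1 : ∀ i ∈ Finset.range (N+1),
          (-1)^(i+1) * (Nat.choose (N+1) (i+1) : ℝ) / (Y - (i+1 : ℕ))
          = (-1)^(i+1) * (Nat.choose N (i+1) : ℝ) / (Y - ((i+1 : ℕ) : ℝ))
            + (-(-1)^i * (Nat.choose N i : ℝ) / ((Y-1) - i)) := by
        intro i _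
        rw [Nat.choose_succ_succ]
        push_cast
        have : Y - ((i : ℝ) + 1) = (Y - 1) - i := by ring
        rw [this]
        ring
      rw [Finset.sum_congr rfl h1, Finset.sum_add_distrib]
      have h2 : ∑ j ∈ Finset.range (N+2), (-1)^j * (Nat.choose N j : ℝ) / (Y - j)
          = ∑ i ∈ Finset.range (N+1), (-1)^(i+1) * (Nat.choose N (i+1) : ℝ) / (Y - ((i+1:ℕ):ℝ))
            + (-1)^0 * (Nat.choose N 0 : ℝ) / (Y - (0:ℕ)) := Finset.sum_range_succ' _ (N+1)
      have h3 : ∑ j ∈ Finset.range (N+2), (-1)^j * (Nat.choose N j : ℝ) / (Y - j)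
          = ∑ j ∈ Finset.range (N+1), (-1)^j * (Nat.choose N j : ℝ) / (Y - j) := by
        rw [Finset.sum_range_succ]
        simp [Nat.choose_succ_self]
      have hc : ∑ i ∈ Finset.range (N+1), (-(-1)^i * (Nat.choose N i : ℝ) / ((Y-1) - i))
          = - ∑ j ∈ Finset.range (N+1), (-1)^j * (Nat.choose N j : ℝ) / ((Y-1) - j) := by
        rw [← Finset.sum_neg_distrib]
        apply Finset.sum_congr rfl
        intro i _
        ring
      rw [hc, ← h3, h2]
      norm_num
      ring
    rw [hsplit]
    have hY1 : ∀ j : ℕ, j ≤ N → Y ≠ j := fun j hj => hY j (by omega)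
    have hY2 : ∀ j : ℕ, j ≤ N → (Y - 1) ≠ j := by
      intro j hj h
      have : Y = ((j+1 : ℕ) : ℝ) := by push_cast; linarith
      exact hY (j+1) (by omega) this
    rw [ih Y hY1, ih (Y-1) hY2]
    -- algebra
    have e1 : poch (Y - N) (N+1) = poch (Y - N) N * Y := by
      rw [poch_succ]; ring_nf
    have e2 : poch (Y - 1 - N) (N+1) = (Y - 1 - N) * poch (Y - N) N := by
      rw [poch_succ_left]; ring_nf
    have e3 : poch (Y - (N+1 : ℕ)) (N+2) = (Y - 1 - N) * (poch (Y - N) N * Y) := by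
      rw [show (N+2) = (N+1)+1 from rfl, poch_succ_left]
      push_cast
      rw [show Y - ((N:ℝ)+1) + 1 = Y - N from by ring, e1]
      ring_nf
    have hQ : poch (Y - N) N ≠ 0 := by
      apply poch_ne_zero
      intro j hj h
      have : Y = ((N - j : ℕ) : ℝ) := by
        rw [Nat.cast_sub (by omega)]; linarith
      exact hY (N - j) (by omega) this
    have hYne : Y ≠ 0 := by
      have := hY 0 (by omega); simpa using this
    have hY1ne : Y - 1 - N ≠ 0 := by
      intro h
      have : Y = ((N+1 : ℕ) : ℝ) := by push_cast; linarith
      exact hY (N+1) le_rfl this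
    rw [e1, e2, e3]
    rw [Nat.factorial_succ]
    push_cast
    field_simp
    ring

lemma genBinom_nat (b k : ℕ) : genBinom (b : ℝ) k = (Nat.choose b k : ℝ) := by
  rw [genBinom, descPochhammer_eval_eq_descFactorial,
    Nat.descFactorial_eq_factorial_mul_choose]
  push_cast
  rw [mul_comm, mul_div_assoc, div_self (by exact_mod_cast k.factorial_ne_zero), mul_one]

/-- The basis case of the partial-fraction finite-difference lemma. -/
theorem stmt_4 (M k : ℕ) (hk : k ≤ M) (X : ℝ) (hX : ∀ b : ℕ, b ≤ M → X ≠ b) :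
    ∑ b ∈ Finset.range (M + 1),
        (-1) ^ b * (Nat.choose M b) * genBinom b k / (X - b) =
      (-1) ^ M * (Nat.factorial M) / poch (X - M) (M + 1) * genBinom X k := by
  have hres : ∑ b ∈ Finset.range (M + 1),
      (-1) ^ b * (Nat.choose M b : ℝ) * genBinom b k / (X - b)
      = ∑ b ∈ Finset.Ico k (M+1),
      (-1) ^ b * (Nat.choose M b : ℝ) * genBinom b k / (X - b) := by
    rw [Finset.range_eq_Ico]
    refine (Finset.sum_subset (Finset.Ico_subset_Ico (Nat.zero_le k) le_rfl) ?_).symm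
    intro x hx hnx
    have hxk : x < k := by
      simp only [Finset.mem_Ico] at hx hnx; omega
    rw [genBinom_nat, Nat.choose_eq_zero_of_lt hxk]
    simp
  rw [hres, Finset.sum_Ico_eq_sum_range, show M + 1 - k = M - k + 1 from by omega]
  have h4 : ∀ i ∈ Finset.range (M-k+1),
      (-1)^(k+i) * (Nat.choose M (k+i) : ℝ) * genBinom ((k+i : ℕ) : ℝ) k / (X - ((k+i : ℕ):ℝ))
      = ((-1)^k * (Nat.choose M k : ℝ)) * ((-1)^i * (Nat.choose (M-k) i : ℝ) / ((X - k) - i)) := by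
    intro i hi
    have hiM : k + i ≤ M := by
      simp only [Finset.mem_range] at hi; omega
    rw [genBinom_nat]
    have hcm : (Nat.choose M (k+i) : ℝ) * (Nat.choose (k+i) k : ℝ)
        = (Nat.choose M k : ℝ) * (Nat.choose (M-k) i : ℝ) := by
      have := Nat.choose_mul (n := M) (Nat.le_add_right k i)
      rw [Nat.add_sub_cancel_left] at this
      exact_mod_cast this
    push_cast
    rw [show (X - k) - i = X - ((k:ℝ) + i) from by ring, ← mul_div_assoc]
    congr 1
    rw [pow_add]
    linear_combination ((-1:ℝ)^k * (-1)^i) * hcm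
  rw [Finset.sum_congr rfl h4, ← Finset.mul_sum]
  have h5 : ∀ j : ℕ, j ≤ M - k → (X - k) ≠ j := by
    intro j hj h
    exact hX (k + j) (by omega) (by push_cast; linarith)
  rw [lemA (M-k) (X - k) h5]
  have hcast : ((M - k : ℕ) : ℝ) = (M : ℝ) - k := by
    rw [Nat.cast_sub hk]
  rw [show X - (k:ℝ) - ((M - k : ℕ) : ℝ) = X - M from by rw [hcast]; ring]
  -- split poch (X-M) (M+1)
  have hpoch : poch (X - M) (M+1) = poch (X - M) (M-k+1) * poch (X - k + 1) k := by
    have h := poch_add (X - M) (M-k+1) k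
    rw [show M - k + 1 + k = M + 1 from by omega] at h
    rw [h, show X - (M:ℝ) + ((M-k+1 : ℕ) : ℝ) = X - k + 1 from by push_cast [hk]; ring]
  have hgB : genBinom X k = poch (X - k + 1) k / (Nat.factorial k) := by
    rw [genBinom, descPochhammer_eval_eq_ascPochhammer]; rfl
  have hA : poch (X - M) (M-k+1) ≠ 0 := by
    apply poch_ne_zero
    intro j hj h
    refine hX (M - j) (by omega) ?_
    rw [Nat.cast_sub (by omega)]; linarith
  have hB : poch (X - k + 1) k ≠ 0 := by
    apply poch_ne_zero
    intro j hj h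
    refine hX (k - 1 - j) (by omega) ?_
    rw [Nat.cast_sub (by omega), Nat.cast_sub (by omega)]
    push_cast; linarith
  rw [hpoch, hgB]
  have hfact : (Nat.choose M k : ℝ) * (Nat.factorial k) * (Nat.factorial (M-k)) = (Nat.factorial M) := by
    exact_mod_cast Nat.choose_mul_factorial_mul_factorial hk
  have hsign : ((-1:ℝ))^M = (-1)^k * (-1)^(M-k) := by
    rw [← pow_add]; congr 1; omega
  rw [hsign]
  have hkf : (Nat.factorial k : ℝ) ≠ 0 := by exact_mod_cast k.factorial_ne_zero
  field_simp
  linear_combination hfact
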